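/- Let 0 = t_0 < t_1 < ⋯ < t_d < t_{d+1} = π be real numbers and c_0, c_1, …, c_{d+1} ∈ ℂ. If lim_{n→∞} Re(c_0 e^{i n t_0} + c_1 e^{i n t_1} + ⋯ + c_{d+1} e^{i n t_{d+1}}) = 0, then Re c_0 = Re c_{d+1} = 0 and c_1 = ⋯ = c_d = 0. -/

import Mathlib

open Filter Finset Complex Topology


/-- Cesàro average of a ℂ null sequence. -/
private lemma cesaroC {u : ℕ → ℂ} (h : Tendsto u atTop (𝓝 0)) :
    Tendsto (fun N : ℕ => (N : ℂ)⁻¹ * ∑ n ∈ range N, u n) atTop (𝓝 0) := by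
  have := h.cesaro_smul
  have heq : (fun N : ℕ => (N : ℂ)⁻¹ * ∑ n ∈ range N, u n)
      = fun N : ℕ => ((N : ℝ)⁻¹ : ℝ) • ∑ n ∈ range N, u n := by
    funext N
    rw [Complex.real_smul]
    push_cast
    ring
  rw [heq]
  exact this

private lemma geo {z : ℂ} (hz : ‖z‖ = 1) (h1 : z ≠ 1) :
    Tendsto (fun N : ℕ => (N : ℂ)⁻¹ * ∑ n ∈ range N, z ^ n) atTop (𝓝 0) := by
  have hz1 : z - 1 ≠ 0 := sub_ne_zero.2 h1
  apply squeeze_zero_norm (a := fun N : ℕ => (N : ℝ)⁻¹ * (2 / ‖z - 1‖))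
  · intro N
    rw [geom_sum_eq h1]
    rw [norm_mul]
    gcongr
    · simp
    · rw [norm_div]
      gcongr
      calc ‖z ^ N - 1‖ ≤ ‖z ^ N‖ + ‖(1:ℂ)‖ := norm_sub_le _ _
        _ = 2 := by simp [norm_pow, hz]; norm_num
  · have : Tendsto (fun N : ℕ => (N : ℝ)⁻¹) atTop (𝓝 0) := tendsto_inv_atTop_nhds_zero_nat
    simpa using this.mul_const (2 / ‖z - 1‖)

private lemma key {ι : Type*} [Fintype ι] (e : ι → ℂ) (he : ∀ i, ‖e i‖ = 1)
    (a : ι → ℂ) (h : Tendsto (fun n : ℕ => ∑ i, a i * e i ^ n) atTop (𝓝 0)) (k : ι) :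
    ∑ i ∈ Finset.univ.filter (fun i => e i = e k), a i = 0 := by
  set w := (e k)⁻¹ with hw
  have hek : e k ≠ 0 := by
    intro h0
    have := he k
    rw [h0] at this
    simp at this
  have hwnorm : ‖w‖ = 1 := by rw [hw, norm_inv, he k, inv_one]
  -- the twisted sequence tends to 0
  have h2 : Tendsto (fun n : ℕ => (∑ i, a i * e i ^ n) * w ^ n) atTop (𝓝 0) := by
    apply squeeze_zero_norm (a := fun n => ‖∑ i, a i * e i ^ n‖)
    · intro n; rw [norm_mul, norm_pow, hwnorm, one_pow, mul_one]
    · exact (tendsto_zero_iff_norm_tendsto_zero.1 h)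
  have h3 := cesaroC h2
  -- compute the Cesàro averages termwise
  have hterm : ∀ i : ι, Tendsto (fun N : ℕ => a i * ((N : ℂ)⁻¹ * ∑ n ∈ range N, (e i * w) ^ n))
      atTop (𝓝 (if e i = e k then a i else 0)) := by
    intro i
    by_cases hik : e i = e k
    · have hw1 : e i * w = 1 := by rw [hik, hw, mul_inv_cancel₀ hek]
      rw [if_pos hik]
      refine Tendsto.congr' ?_ (tendsto_const_nhds (x := a i))
      filter_upwards [Filter.eventually_ge_atTop 1] with N hN
      have hN0 : (N : ℂ) ≠ 0 := Nat.cast_ne_zero.2 (by omega)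
      simp [hw1, inv_mul_cancel₀ hN0]
    · rw [if_neg hik]
      have hne1 : e i * w ≠ 1 := by
        intro hcon
        apply hik
        rw [hw, mul_inv_eq_one₀ hek] at hcon
        exact hcon
      have hnorm : ‖e i * w‖ = 1 := by rw [norm_mul, he i, hwnorm, mul_one]
      simpa using (geo hnorm hne1).const_mul (a i)
  have h4 : Tendsto (fun N : ℕ => ∑ i, a i * ((N : ℂ)⁻¹ * ∑ n ∈ range N, (e i * w) ^ n))
      atTop (𝓝 (∑ i, if e i = e k then a i else 0)) :=
    tendsto_finset_sum _ fun i _ => hterm i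
  rw [← Finset.sum_filter] at h4
  -- identify the two sequences
  have heq : ∀ N : ℕ, (N : ℂ)⁻¹ * ∑ n ∈ range N, (∑ i, a i * e i ^ n) * w ^ n
      = ∑ i, a i * ((N : ℂ)⁻¹ * ∑ n ∈ range N, (e i * w) ^ n) := by
    intro N
    rw [Finset.mul_sum]
    simp only [Finset.sum_mul, Finset.mul_sum, mul_pow]
    rw [Finset.sum_comm]
    exact Finset.sum_congr rfl fun i _ => Finset.sum_congr rfl fun n _ => by ring
  exact tendsto_nhds_unique (h4.congr fun N => (heq N).symm) h3



private lemma expI_eq_iff (x y : ℝ) :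
    Complex.exp (Complex.I * x) = Complex.exp (Complex.I * y) ↔
      ∃ n : ℤ, x = y + n * (2 * Real.pi) := by
  rw [Complex.exp_eq_exp_iff_exists_int]
  constructor
  · rintro ⟨n, hn⟩
    refine ⟨n, ?_⟩
    have hn' : Complex.I * x = Complex.I * ((y : ℂ) + n * (2 * Real.pi)) := by
      rw [hn]; ring
    have := mul_left_cancel₀ Complex.I_ne_zero hn'
    exact_mod_cast this
  · rintro ⟨n, hn⟩
    exact ⟨n, by rw [hn]; push_cast; ring⟩

private lemma shift_zero {n : ℤ} {r : ℝ} (h : r = n * (2 * Real.pi))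
    (h1 : -(2 * Real.pi) < r) (h2 : r < 2 * Real.pi) : r = 0 := by
  have hπ := Real.pi_pos
  have hn : n = 0 := by
    by_contra hne
    have h1' : (1 : ℝ) ≤ |(n : ℝ)| := by
      rw [← Int.cast_abs]
      exact_mod_cast Int.one_le_abs hne
    have hr : |r| < 2 * Real.pi := abs_lt.2 ⟨by linarith, h2⟩
    rw [h, abs_mul, abs_of_pos (by linarith : (0:ℝ) < 2 * Real.pi)] at hr
    nlinarith
  simp [h, hn]

private lemma shift_neg_one {n : ℤ} (h1 : -(2 * Real.pi) ≤ (n : ℝ) * (2 * Real.pi))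
    (h2 : (n : ℝ) * (2 * Real.pi) ≤ -Real.pi) : n = -1 := by
  have hπ := Real.pi_pos
  have ha : -1 ≤ n := by
    by_contra hx; push_neg at hx
    have hn2 : n ≤ -2 := by omega
    have : (n : ℝ) ≤ -2 := by exact_mod_cast hn2
    nlinarith
  have hb : n ≤ -1 := by
    by_contra hx; push_neg at hx
    have : (0 : ℝ) ≤ (n : ℝ) := by exact_mod_cast (by omega : (0:ℤ) ≤ n)
    nlinarith
  omega

private noncomputable def eAux {d : ℕ} (t : Fin (d + 2) → ℝ) (p : Fin (d + 2) × Bool) : ℂ :=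
  Complex.exp (Complex.I * ((if p.2 then -t p.1 else t p.1 : ℝ) : ℂ))

private noncomputable def aAux {d : ℕ} (c : Fin (d + 2) → ℂ) (p : Fin (d + 2) × Bool) : ℂ :=
  (if p.2 then (starRingEnd ℂ) (c p.1) else c p.1) / 2

private lemma eAux_false {d : ℕ} (t : Fin (d + 2) → ℝ) (j : Fin (d + 2)) :
    eAux t (j, false) = Complex.exp (Complex.I * (t j : ℂ)) := by simp [eAux]

private lemma eAux_true {d : ℕ} (t : Fin (d + 2) → ℝ) (j : Fin (d + 2)) :
    eAux t (j, true) = Complex.exp (Complex.I * ((-t j : ℝ) : ℂ)) := by simp [eAux]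

private lemma aAux_false {d : ℕ} (c : Fin (d + 2) → ℂ) (j : Fin (d + 2)) :
    aAux c (j, false) = c j / 2 := by simp [aAux]

private lemma aAux_true {d : ℕ} (c : Fin (d + 2) → ℂ) (j : Fin (d + 2)) :
    aAux c (j, true) = (starRingEnd ℂ) (c j) / 2 := by simp [aAux]

private lemma eAux_norm {d : ℕ} (t : Fin (d + 2) → ℝ) (p : Fin (d + 2) × Bool) :
    ‖eAux t p‖ = 1 := by
  rw [eAux, Complex.norm_exp]
  simp

private lemma sum_pick {β : Type*} [AddCommMonoid β] {m : ℕ} (f : Fin m → β) (j0 : Fin m)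
    (P : Fin m → Prop) [DecidablePred P] (hP : ∀ j, P j ↔ j = j0) :
    ∑ j, (if P j then f j else 0) = f j0 := by
  rw [Finset.sum_congr rfl (fun j _ => if_congr (hP j) rfl rfl)]
  simp [Finset.sum_ite_eq']

private lemma sum_none {β : Type*} [AddCommMonoid β] {m : ℕ} (f : Fin m → β)
    (P : Fin m → Prop) [DecidablePred P] (hP : ∀ j, ¬ P j) :
    ∑ j, (if P j then f j else 0) = 0 := by
  rw [Finset.sum_congr rfl (fun j _ => if_neg (hP j))]
  simp

theorem re_trig_limit_zero (d : ℕ) (t : Fin (d + 2) → ℝ) (ht0 : t 0 = 0)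
    (htlast : t (Fin.last (d + 1)) = Real.pi) (hmono : StrictMono t) (c : Fin (d + 2) → ℂ)
    (h : Filter.Tendsto
        (fun n : ℕ => (∑ j, c j * Complex.exp (Complex.I * (n : ℂ) * (t j : ℂ))).re)
        Filter.atTop (nhds 0)) :
    (c 0).re = 0 ∧ (c (Fin.last (d + 1))).re = 0 ∧
      ∀ j : Fin (d + 2), j ≠ 0 → j ≠ Fin.last (d + 1) → c j = 0 := by
  have hπ := Real.pi_pos
  have hub : ∀ j, t j ≤ Real.pi := fun j => htlast ▸ hmono.monotone (Fin.le_last j)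
  have hlb : ∀ j, 0 ≤ t j := fun j => ht0 ▸ hmono.monotone (Fin.zero_le j)
  have ht_eq_zero : ∀ j : Fin (d + 2), t j = 0 → j = 0 := by
    intro j hj
    by_contra hne
    have h1 : (0 : Fin (d + 2)) < j := Fin.pos_of_ne_zero hne
    have := hmono h1
    rw [ht0, hj] at this
    exact lt_irrefl _ this
  have ht_eq_pi : ∀ j : Fin (d + 2), t j = Real.pi → j = Fin.last (d + 1) := by
    intro j hj
    by_contra hne
    have h1 : j < Fin.last (d + 1) := lt_of_le_of_ne (Fin.le_last j) hne
    have := hmono h1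
    rw [htlast, hj] at this
    exact lt_irrefl _ this
  -- rewrite the sequence as a sum of modes
  have hsum : ∀ n : ℕ, (((∑ j, c j * Complex.exp (Complex.I * (n : ℂ) * (t j : ℂ))).re : ℝ) : ℂ)
      = ∑ p : Fin (d + 2) × Bool, aAux c p * eAux t p ^ n := by
    intro n
    have hre : ∀ z : ℂ, ((z.re : ℝ) : ℂ) = (z + (starRingEnd ℂ) z) / 2 := by
      intro z; rw [Complex.add_conj]; push_cast; ring
    rw [hre, map_sum, ← Finset.sum_add_distrib, Finset.sum_div, Fintype.sum_prod_type]
    refine Finset.sum_congr rfl fun j _ => ?_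
    rw [Fintype.sum_bool, eAux_true, eAux_false, aAux_true, aAux_false]
    rw [map_mul, ← Complex.exp_conj]
    have h1 : Complex.exp (Complex.I * (t j : ℂ)) ^ n
        = Complex.exp (Complex.I * (n : ℂ) * (t j : ℂ)) := by
      rw [← Complex.exp_nat_mul]; congr 1; ring
    have h2 : Complex.exp (Complex.I * ((-t j : ℝ) : ℂ)) ^ n
        = Complex.exp ((starRingEnd ℂ) (Complex.I * (n : ℂ) * (t j : ℂ))) := by
      rw [← Complex.exp_nat_mul]; congr 1
      simp only [map_mul, Complex.conj_I, Complex.conj_ofReal, map_natCast]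
      push_cast; ring
    rw [h1, h2]; ring
  have hS : Filter.Tendsto (fun n : ℕ => ∑ p : Fin (d + 2) × Bool, aAux c p * eAux t p ^ n)
      Filter.atTop (𝓝 0) := by
    have h0 := (Complex.continuous_ofReal.tendsto 0).comp h
    have := h0.congr (fun n => hsum n)
    simpa using this
  have hkey := fun k => key (eAux t) (eAux_norm t) (aAux c) hS k
  refine ⟨?_, ?_, ?_⟩
  · -- Re c 0 = 0
    have hA := hkey ((0 : Fin (d + 2)), false)
    rw [Finset.sum_filter, Fintype.sum_prod_type] at hA
    simp only [Fintype.sum_bool] at hA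
    rw [Finset.sum_add_distrib] at hA
    have hc1 : ∀ j : Fin (d + 2), (eAux t (j, true) = eAux t (0, false)) ↔ j = 0 := by
      intro j
      rw [eAux_true, eAux_false, expI_eq_iff]
      constructor
      · rintro ⟨n, hn⟩
        rw [ht0, zero_add] at hn
        have := shift_zero hn (by linarith [hub j]) (by linarith [hlb j])
        exact ht_eq_zero j (by linarith)
      · rintro rfl
        exact ⟨0, by rw [ht0]; push_cast; ring⟩
    have hc2 : ∀ j : Fin (d + 2), (eAux t (j, false) = eAux t (0, false)) ↔ j = 0 := by
      intro j
      rw [eAux_false, eAux_false, expI_eq_iff]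
      constructor
      · rintro ⟨n, hn⟩
        rw [ht0, zero_add] at hn
        have := shift_zero hn (by linarith [hlb j]) (by linarith [hub j])
        exact ht_eq_zero j this
      · rintro rfl
        exact ⟨0, by push_cast; ring⟩
    rw [sum_pick _ 0 _ hc1, sum_pick _ 0 _ hc2, aAux_true, aAux_false] at hA
    have hsum0 : c 0 + (starRingEnd ℂ) (c 0) = 0 := by linear_combination 2 * hA
    rw [Complex.add_conj] at hsum0
    have : (2 : ℝ) * (c 0).re = 0 := by exact_mod_cast hsum0
    linarith
  · -- Re c last = 0
    have hA := hkey ((Fin.last (d + 1) : Fin (d + 2)), false)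
    rw [Finset.sum_filter, Fintype.sum_prod_type] at hA
    simp only [Fintype.sum_bool] at hA
    rw [Finset.sum_add_distrib] at hA
    have hc1 : ∀ j : Fin (d + 2), (eAux t (j, true) = eAux t (Fin.last (d + 1), false))
        ↔ j = Fin.last (d + 1) := by
      intro j
      rw [eAux_true, eAux_false, expI_eq_iff]
      constructor
      · rintro ⟨n, hn⟩
        rw [htlast] at hn
        have hr : (n : ℝ) * (2 * Real.pi) = -t j - Real.pi := by linarith
        have hn1 : n = -1 :=
          shift_neg_one (by rw [hr]; linarith [hub j]) (by rw [hr]; linarith [hlb j])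
        rw [hn1] at hn
        push_cast at hn
        exact ht_eq_pi j (by linarith)
      · rintro rfl
        exact ⟨-1, by rw [htlast]; push_cast; ring⟩
    have hc2 : ∀ j : Fin (d + 2), (eAux t (j, false) = eAux t (Fin.last (d + 1), false))
        ↔ j = Fin.last (d + 1) := by
      intro j
      rw [eAux_false, eAux_false, expI_eq_iff]
      constructor
      · rintro ⟨n, hn⟩
        rw [htlast] at hn
        have hr : t j - Real.pi = (n : ℝ) * (2 * Real.pi) := by linarith
        have := shift_zero hr (by linarith [hlb j]) (by linarith [hub j])
        exact ht_eq_pi j (by linarith)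
      · rintro rfl
        exact ⟨0, by push_cast; ring⟩
    rw [sum_pick _ _ _ hc1, sum_pick _ _ _ hc2, aAux_true, aAux_false] at hA
    have hsum0 : c (Fin.last (d + 1)) + (starRingEnd ℂ) (c (Fin.last (d + 1))) = 0 := by
      linear_combination 2 * hA
    rw [Complex.add_conj] at hsum0
    have : (2 : ℝ) * (c (Fin.last (d + 1))).re = 0 := by exact_mod_cast hsum0
    linarith
  · -- middle coefficients vanish
    intro j0 hj00 hj0l
    have h0 : 0 < t j0 := lt_of_le_of_ne (hlb j0) (fun hh => hj00 (ht_eq_zero j0 hh.symm))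
    have hπ' : t j0 < Real.pi := lt_of_le_of_ne (hub j0) (fun hh => hj0l (ht_eq_pi j0 hh))
    have hA := hkey ((j0 : Fin (d + 2)), false)
    rw [Finset.sum_filter, Fintype.sum_prod_type] at hA
    simp only [Fintype.sum_bool] at hA
    rw [Finset.sum_add_distrib] at hA
    have hcT : ∀ j : Fin (d + 2), ¬ (eAux t (j, true) = eAux t (j0, false)) := by
      intro j
      rw [eAux_true, eAux_false, expI_eq_iff]
      rintro ⟨n, hn⟩
      have hr : -t j - t j0 = (n : ℝ) * (2 * Real.pi) := by linarith
      have := shift_zero hr (by linarith [hub j]) (by linarith [hlb j])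
      linarith [hlb j]
    have hcF : ∀ j : Fin (d + 2), (eAux t (j, false) = eAux t (j0, false)) ↔ j = j0 := by
      intro j
      rw [eAux_false, eAux_false, expI_eq_iff]
      constructor
      · rintro ⟨n, hn⟩
        have hr : t j - t j0 = (n : ℝ) * (2 * Real.pi) := by linarith
        have := shift_zero hr (by linarith [hlb j]) (by linarith [hub j])
        exact hmono.injective (by linarith)
      · rintro rfl
        exact ⟨0, by push_cast; ring⟩
    rw [sum_none _ _ hcT, sum_pick _ _ _ hcF, aAux_false, zero_add] at hA
    linear_combination 2 * hA
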